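/- Let φ ∧ C be a CNF in the QEALM fragment with distinguished clause C. If φ ∧ C is satisfiable, then there is a component K of C such that φ ∧ K is satisfiable. -/

import Mathlib

/-- Terms over variables `V` and constant symbols `K`
(Bernays–Schönfinkel: the only function symbols are constants). -/
inductive Trm (V K : Type) : Type where
  | var : V → Trm V K
  | const : K → Trm V K
deriving DecidableEq

/-- A first-order literal (no equality): a polarity, a predicate symbol
and a list of argument terms. -/
structure Lit (V K P : Type) : Type where
  pol : Bool
  pred : P
  args : List (Trm V K)
deriving DecidableEq

/-- A clause is a (finite) set of literals, read disjunctively. -/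
abbrev Clause (V K P : Type) := Finset (Lit V K P)

/-- A CNF is a list of clauses, read conjunctively,
with all variables universally quantified. -/
abbrev CNF (V K P : Type) := List (Clause V K P)

variable {V K P : Type}

/-- The argument of a literal at the (1-based) position `i`. -/
def Lit.argAt (l : Lit V K P) : ℕ → Option (Trm V K)
  | 0 => none
  | i + 1 => l.args[i]?

/-- Variable `u` occurs at argument position `i` of the literal `l`. -/
def Lit.varAt (l : Lit V K P) (u : V) (i : ℕ) : Prop := l.argAt i = some (Trm.var u)

/-- Variable `u` occurs in the literal `l`. -/
def Lit.hasVar (l : Lit V K P) (u : V) : Prop := ∃ i, l.varAt u i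

/-- `i` is the least argument position at which `u` occurs in `l`. -/
def Lit.firstOccAt (l : Lit V K P) (u : V) (i : ℕ) : Prop :=
  l.varAt u i ∧ ∀ j, l.varAt u j → i ≤ j

/-- The QEALM clause condition: whenever a variable `u` occurs in several
literals of the clause, the least position at which it occurs is the same in
all these literals, and these literals agree on all argument positions up to
(and including) that one (a shared initial segment). -/
def QEALMClause (C : Clause V K P) : Prop :=
  ∀ (u : V), ∀ l₁ ∈ C, ∀ l₂ ∈ C, l₁.hasVar u → l₂.hasVar u →
    ∃ i, l₁.firstOccAt u i ∧ l₂.firstOccAt u i ∧ ∀ j ≤ i, l₁.argAt j = l₂.argAt j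

/-- A CNF is in the QEALM fragment iff every clause satisfies the QEALM clause condition. -/
def QEALM (φ : CNF V K P) : Prop := ∀ C ∈ φ, QEALMClause C

/-- A first-order structure for the signature `(K, P)` (no equality). -/
structure Model (K P : Type) : Type 1 where
  Dom : Type
  dne : Nonempty Dom
  constVal : K → Dom
  predVal : P → List Dom → Prop

/-- Value of a term in a model under a variable assignment. -/
def Trm.val (M : Model K P) (ρ : V → M.Dom) : Trm V K → M.Dom
  | .var u => ρ u
  | .const c => M.constVal c

/-- Truth of a literal in a model under a variable assignment. -/
def Lit.holds (M : Model K P) (ρ : V → M.Dom) (l : Lit V K P) : Prop :=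
  if l.pol then M.predVal l.pred (l.args.map (Trm.val M ρ))
  else ¬ M.predVal l.pred (l.args.map (Trm.val M ρ))

/-- Truth of a clause (a disjunction of literals). -/
def Clause.holds (M : Model K P) (ρ : V → M.Dom) (C : Clause V K P) : Prop :=
  ∃ l ∈ C, l.holds M ρ

/-- First-order satisfiability (without equality) of a universally quantified CNF. -/
def CNF.Satisfiable (φ : CNF V K P) : Prop :=
  ∃ M : Model K P, ∀ ρ : V → M.Dom, ∀ C ∈ φ, C.holds M ρ

/-- Applying a substitution to a term. -/
def Trm.subst (σ : V → Trm V K) : Trm V K → Trm V K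
  | .var u => σ u
  | .const c => .const c

/-- Applying a substitution to a literal. -/
def Lit.subst (σ : V → Trm V K) (l : Lit V K P) : Lit V K P :=
  ⟨l.pol, l.pred, l.args.map (Trm.subst σ)⟩

/-- Applying a substitution to a clause. -/
def Clause.subst [DecidableEq V] [DecidableEq K] [DecidableEq P]
    (σ : V → Trm V K) (C : Clause V K P) : Clause V K P :=
  C.image (Lit.subst σ)

/-- Applying a substitution to a CNF. -/
def CNF.subst [DecidableEq V] [DecidableEq K] [DecidableEq P]
    (σ : V → Trm V K) (φ : CNF V K P) : CNF V K P :=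
  φ.map (Clause.subst σ)

/-- An outer variable of a clause: a variable appearing in every literal of the clause. -/
def OuterVar (C : Clause V K P) (u : V) : Prop := ∀ l ∈ C, l.hasVar u

/-- `i` is the least position of an occurrence of `u` in any literal of `C`. -/
def LeastOccIn (C : Clause V K P) (u : V) (i : ℕ) : Prop :=
  (∃ l ∈ C, l.varAt u i) ∧ ∀ j, (∃ l ∈ C, l.varAt u j) → i ≤ j

/-- `i` is an outer position of the clause `C`. -/
def OuterPosClause (C : Clause V K P) (i : ℕ) : Prop :=
  ∃ u : V, OuterVar C u ∧ LeastOccIn C u i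

/-- `i` is a neutral position of the clause `C`: some term `t`, a constant or an
outer variable of `C`, occupies the `i`-th argument of every literal of `C`. -/
def NeutralPos (C : Clause V K P) (i : ℕ) : Prop :=
  ∃ t : Trm V K,
    ((∃ c, t = Trm.const c) ∨ (∃ u, t = Trm.var u ∧ OuterVar C u)) ∧
    ∀ l ∈ C, l.argAt i = some t

/-- `i` is an outer position of the CNF `φ`: an outer position of some clause and a
neutral position of every clause. -/
def OuterPosCNF (φ : CNF V K P) (i : ℕ) : Prop :=
  (∃ C ∈ φ, OuterPosClause C i) ∧ ∀ D ∈ φ, NeutralPos D i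

/-- Variable `u` occurs at argument position `i` in some literal of `φ`. -/
def VarOccursAt (φ : CNF V K P) (u : V) (i : ℕ) : Prop :=
  ∃ C ∈ φ, ∃ l ∈ C, l.varAt u i

/-- `σ` is the substitution that replaces every variable occurring at an argument
position `i` that is an outer position of `φ` by the constant `c i`, and leaves
all other variables unchanged. -/
def IsOuterSubst (φ : CNF V K P) (c : ℕ → K) (σ : V → Trm V K) : Prop :=
  (∀ u i, OuterPosCNF φ i → VarOccursAt φ u i → σ u = Trm.const (c i)) ∧
  (∀ u, (¬ ∃ i, OuterPosCNF φ i ∧ VarOccursAt φ u i) → σ u = Trm.var u)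

/-- A clause is inseparable if it is a single literal or some variable occurs in
every literal of the clause. -/
def InsepClause (C : Clause V K P) : Prop :=
  (∃ l, C = {l}) ∨ ∃ u : V, ∀ l ∈ C, l.hasVar u

/-- `Kc` is a component of a clause `C`: a non-empty inseparable subclause of `C`
closed under sharing variables with literals of `C`. -/
def IsComponent (Kc C : Clause V K P) : Prop :=
  Kc.Nonempty ∧ Kc ⊆ C ∧ InsepClause Kc ∧
    ∀ a ∈ Kc, ∀ b ∈ C, (∃ u : V, a.hasVar u ∧ b.hasVar u) → b ∈ Kc

/-- All variables shared between `l₁` and `l₂` occur as arguments in positions `≤ m`. -/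
def SharesUpTo (l₁ l₂ : Lit V K P) (m : ℕ) : Prop :=
  ∀ u : V, l₁.hasVar u → l₂.hasVar u →
    (∃ j ≤ m, l₁.varAt u j) ∧ (∃ j ≤ m, l₂.varAt u j)

/-- `i` is a fork index of `φ`: for some clause `C` of `φ` and literals `l₁, l₂` of
`C` (not necessarily distinct), `i` is the minimal value such that every variable
shared between `l₁` and `l₂` occurs at some argument position `≤ i`.  In particular,
`0` is a fork index if some such pair shares no variables. -/
def ForkIndex (φ : CNF V K P) (i : ℕ) : Prop :=
  ∃ C ∈ φ, ∃ l₁ ∈ C, ∃ l₂ ∈ C, IsLeast {m | SharesUpTo l₁ l₂ m} i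

/-- `w` is the variable at the least argument position of `l` holding a variable,
and `p` is that position. -/
def Lit.FirstVar (l : Lit V K P) (w : V) (p : ℕ) : Prop :=
  l.varAt w p ∧ ∀ j u, l.varAt u j → p ≤ j

lemma exists_firstVar (l : Lit V K P) (u : V) (h : l.hasVar u) :
    ∃ w p, l.FirstVar w p := by
  classical
  have hne : {j | ∃ v, l.varAt v j}.Nonempty := by
    obtain ⟨i, hi⟩ := h
    exact ⟨i, u, hi⟩
  obtain ⟨v, hv⟩ := Nat.sInf_mem hne
  exact ⟨v, _, hv, fun j u' hj => Nat.sInf_le ⟨u', hj⟩⟩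

lemma firstVar_unique {l : Lit V K P} {w w' : V} {p p' : ℕ}
    (h : l.FirstVar w p) (h' : l.FirstVar w' p') : w = w' ∧ p = p' := by
  have hp : p = p' := le_antisymm (h.2 _ _ h'.1) (h'.2 _ _ h.1)
  subst hp
  have e := h.1
  have e' := h'.1
  unfold Lit.varAt at e e'
  rw [e] at e'
  exact ⟨by injection e' with e2; injection e2, rfl⟩

lemma share_firstVar {C : Clause V K P} (hq : QEALMClause C) {a b : Lit V K P}
    (ha : a ∈ C) (hb : b ∈ C) {u : V} (hau : a.hasVar u) (hbu : b.hasVar u) :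
    ∃ w p, a.FirstVar w p ∧ b.FirstVar w p := by
  obtain ⟨i, hfa, hfb, hagree⟩ := hq u a ha b hb hau hbu
  obtain ⟨w, p, hwp⟩ := exists_firstVar a u hau
  obtain ⟨w', p', hwp'⟩ := exists_firstVar b u hbu
  have hpi : p ≤ i := hwp.2 _ _ hfa.1
  have hpi' : p' ≤ i := hwp'.2 _ _ hfb.1
  have hbp : b.varAt w p := by
    show b.argAt p = some (Trm.var w)
    rw [← hagree p hpi]
    exact hwp.1
  have hap' : a.varAt w' p' := by
    show a.argAt p' = some (Trm.var w')
    rw [hagree p' hpi']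
    exact hwp'.1
  have hpp' : p = p' := le_antisymm (hwp.2 _ _ hap') (hwp'.2 _ _ hbp)
  subst hpp'
  exact ⟨w, p, hwp, hbp, hwp'.2⟩

lemma Lit.holds_congr (M : Model K P) {ρ ρ' : V → M.Dom} {l : Lit V K P}
    (h : ∀ u, l.hasVar u → ρ u = ρ' u) : l.holds M ρ ↔ l.holds M ρ' := by
  have harg : l.args.map (Trm.val M ρ) = l.args.map (Trm.val M ρ') := by
    apply List.map_congr_left
    intro t ht
    obtain ⟨i, hi, hti⟩ := List.mem_iff_getElem.mp ht
    cases t with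
    | const c => rfl
    | var u =>
      have hu : l.hasVar u := by
        refine ⟨i + 1, ?_⟩
        show l.argAt (i + 1) = some (Trm.var u)
        simp [Lit.argAt, List.getElem?_eq_getElem hi, hti]
      simp [Trm.val, h u hu]
  unfold Lit.holds
  rw [harg]

/-- If `φ ∧ C` is a satisfiable CNF in the QEALM fragment, then
there is a component `Kc` of `C` such that `φ ∧ Kc` is satisfiable. -/
theorem statement_4 (φ : CNF V K P) (C : Clause V K P)
    (hq : QEALM (C :: φ)) (hsat : CNF.Satisfiable (C :: φ)) :
    ∃ Kc : Clause V K P, IsComponent Kc C ∧ CNF.Satisfiable (Kc :: φ) := by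
  classical
  by_contra hgoal
  push_neg at hgoal
  obtain ⟨M, hM⟩ := hsat
  have hqC : QEALMClause C := hq C List.mem_cons_self
  have hfail : ∀ Kc : Clause V K P, IsComponent Kc C →
      ∃ ρ : V → M.Dom, ¬ Kc.holds M ρ := by
    intro Kc hKc
    by_contra hx
    push_neg at hx
    refine hgoal Kc hKc ⟨M, fun ρ D hD => ?_⟩
    rcases List.mem_cons.mp hD with h | h
    · exact h ▸ hx ρ
    · exact hM ρ D (List.mem_cons_of_mem _ h)
  set compW : V → Clause V K P := fun w => C.filter (fun l => l.hasVar w) with hcompW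
  have hcomp : ∀ a ∈ C, ∀ (w : V) (p : ℕ), a.FirstVar w p → IsComponent (compW w) C := by
    intro a haC w p hfv
    have haw : a.hasVar w := ⟨p, hfv.1⟩
    refine ⟨⟨a, Finset.mem_filter.mpr ⟨haC, haw⟩⟩, Finset.filter_subset _ _,
      Or.inr ⟨w, fun l hl => (Finset.mem_filter.mp hl).2⟩, ?_⟩
    rintro x hx b hbC ⟨u, hxu, hbu⟩
    have hxC := (Finset.mem_filter.mp hx).1
    have hxw : x.hasVar w := (Finset.mem_filter.mp hx).2
    obtain ⟨w1, p1, hx1, hb1⟩ := share_firstVar hqC hxC hbC hxu hbu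
    obtain ⟨w2, p2, hx2, ha2⟩ := share_firstVar hqC hxC haC hxw haw
    have hw21 : w2 = w := (firstVar_unique ha2 hfv).1
    have hw12 : w1 = w2 := (firstVar_unique hx1 hx2).1
    have hw : w1 = w := hw12.trans hw21
    exact Finset.mem_filter.mpr ⟨hbC, hw ▸ ⟨p1, hb1.1⟩⟩
  have hd : M.Dom := Classical.choice M.dne
  set ρw : V → (V → M.Dom) := fun w =>
    if h : IsComponent (compW w) C then Classical.choose (hfail _ h) else fun _ => hd with hρw
  set Q : V → V → Prop := fun u w => ∃ a ∈ C, ∃ p, a.hasVar u ∧ a.FirstVar w p with hQ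
  have hQuniq : ∀ u w w', Q u w → Q u w' → w = w' := by
    rintro u w w' ⟨a, haC, p, hau, hfa⟩ ⟨a', haC', p', hau', hfa'⟩
    obtain ⟨w0, p0, h1, h2⟩ := share_firstVar hqC haC haC' hau hau'
    exact (firstVar_unique h1 hfa).1.symm.trans (firstVar_unique h2 hfa').1
  set ρ : V → M.Dom := fun u => if h : ∃ w, Q u w then ρw (Classical.choose h) u else hd
    with hρdef
  obtain ⟨a, haC, hahold⟩ := hM ρ C List.mem_cons_self
  by_cases hg : ∃ u, a.hasVar u
  · obtain ⟨u, hau⟩ := hg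
    obtain ⟨w, p, hfv⟩ := exists_firstVar a u hau
    have hKw := hcomp a haC w p hfv
    have hρweq : ρw w = Classical.choose (hfail _ hKw) := by
      rw [hρw]
      exact dif_pos hKw
    have hspec : ¬ (compW w).holds M (ρw w) := by
      rw [hρweq]
      exact Classical.choose_spec (hfail _ hKw)
    have hmem : a ∈ compW w := Finset.mem_filter.mpr ⟨haC, ⟨p, hfv.1⟩⟩
    have hagree : ∀ v, a.hasVar v → ρ v = ρw w v := by
      intro v hav
      have hQv : ∃ w', Q v w' := ⟨w, a, haC, p, hav, hfv⟩
      have hcw : Classical.choose hQv = w :=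
        hQuniq v _ w (Classical.choose_spec hQv) ⟨a, haC, p, hav, hfv⟩
      rw [hρdef]
      simp only [dif_pos hQv, hcw]
    exact hspec ⟨a, hmem, (Lit.holds_congr M hagree).mp hahold⟩
  · push_neg at hg
    have hK : IsComponent {a} C := by
      refine ⟨⟨a, Finset.mem_singleton_self a⟩, Finset.singleton_subset_iff.mpr haC,
        Or.inl ⟨a, rfl⟩, ?_⟩
      rintro x hx b hbC ⟨u, hxu, -⟩
      rw [Finset.mem_singleton] at hx
      subst hx
      exact absurd hxu (hg u)
    obtain ⟨ρ0, hρ0⟩ := hfail _ hK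
    have hna : ¬ a.holds M ρ0 := fun h => hρ0 ⟨a, Finset.mem_singleton_self a, h⟩
    exact hna ((Lit.holds_congr M (fun v hv => absurd hv (hg v))).mp hahold)
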